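/- Let Γ_1,...,Γ_K be pairwise anticommuting Hermitian d×d matrices with Γ_j² = I, and let ρ be a density matrix on C^d. Then ∑_{j=1}^K (Tr(ρΓ_j))² ≤ 1. -/

import Mathlib

open scoped ComplexOrder
open Matrix

lemma aux_psd_smul {n : ℕ} {M : Matrix (Fin n) (Fin n) ℂ} (hM : M.PosSemidef)
    {c : ℝ} (hc : 0 ≤ c) : ((c : ℂ) • M).PosSemidef := by
  constructor
  · have := hM.1
    unfold Matrix.IsHermitian at *
    rw [Matrix.conjTranspose_smul, this]
    simp [Complex.conj_ofReal]
  · have h1 : (0 : ℂ) ≤ (c : ℂ) := by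
      rw [Complex.le_def]; simp [hc]
    exact (hM.smul h1).2

lemma aux_psd_trace_nonneg {n : ℕ} {M : Matrix (Fin n) (Fin n) ℂ}
    (hM : M.PosSemidef) : 0 ≤ M.trace := by
  rw [Matrix.trace]
  apply Finset.sum_nonneg
  intro i _
  have := hM.dotProduct_mulVec_nonneg (Pi.single i 1)
  simpa [Matrix.mulVec_single, dotProduct, Pi.single_apply] using this

open scoped MatrixOrder in
lemma aux_trace_mul_psd_nonneg {n : ℕ} {A B : Matrix (Fin n) (Fin n) ℂ}
    (hA : A.PosSemidef) (hB : B.PosSemidef) : 0 ≤ (A * B).trace := by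
  have hQ : (CFC.sqrt A).PosSemidef := (CFC.sqrt_nonneg A).posSemidef
  have hpsd : ((CFC.sqrt A)ᴴ * B * CFC.sqrt A).PosSemidef := hB.conjTranspose_mul_mul_same _
  have h1 : ((CFC.sqrt A)ᴴ * B * CFC.sqrt A).trace = (A * B).trace := by
    rw [Matrix.trace_mul_cycle, hQ.1.eq, CFC.sqrt_mul_sqrt_self A hA.nonneg]
  rw [← h1]
  exact aux_psd_trace_nonneg hpsd

/-- Meta-uncertainty relation: for pairwise anticommuting Hermitian matrices `Γ_j` with
`Γ_j² = I` and any density matrix `ρ`, one has `∑_j (Tr(ρ Γ_j))² ≤ 1`. -/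
theorem stmt_5 {d K : ℕ}
    (Γ : Fin K → Matrix (Fin d) (Fin d) ℂ)
    (hherm : ∀ j, (Γ j).IsHermitian)
    (hanti : ∀ i j, i ≠ j → Γ i * Γ j + Γ j * Γ i = 0)
    (hsq : ∀ j, Γ j * Γ j = 1)
    (ρ : Matrix (Fin d) (Fin d) ℂ) (hρ : ρ.PosSemidef) (htr : ρ.trace = 1) :
    ∑ j, ((ρ * Γ j).trace).re ^ 2 ≤ 1 := by
  set c : Fin K → ℝ := fun j => ((ρ * Γ j).trace).re with hc
  set s : ℝ := ∑ j, (c j) ^ 2 with hs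
  show s ≤ 1
  have hs0 : 0 ≤ s := Finset.sum_nonneg fun j _ => sq_nonneg _
  rcases eq_or_lt_of_le hs0 with h0 | hpos
  · linarith
  set G : Matrix (Fin d) (Fin d) ℂ := ∑ j, (c j : ℂ) • Γ j with hG
  have hGh : G.IsHermitian := by
    unfold Matrix.IsHermitian
    rw [hG, Matrix.conjTranspose_sum]
    refine Finset.sum_congr rfl fun j _ => ?_
    rw [Matrix.conjTranspose_smul, (hherm j).eq]
    simp [Complex.conj_ofReal]
  have hGG : G * G = (s : ℂ) • 1 := by
    have expand : G * G = ∑ i, ∑ j, ((c i : ℂ) * c j) • (Γ i * Γ j) := by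
      rw [hG, Finset.sum_mul]
      refine Finset.sum_congr rfl fun i _ => ?_
      rw [Finset.mul_sum]
      refine Finset.sum_congr rfl fun j _ => ?_
      rw [Matrix.smul_mul, Matrix.mul_smul, smul_smul]
    have key : (2 : ℂ) • (G * G) = (2 : ℂ) • ((s : ℂ) • 1) := by
      have h2 : G * G + G * G
          = ∑ i, ∑ j, (((c i : ℂ) * c j) • (Γ i * Γ j) + ((c j : ℂ) * c i) • (Γ j * Γ i)) := by
        nth_rewrite 2 [expand]
        rw [Finset.sum_comm]
        rw [expand, ← Finset.sum_add_distrib]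
        exact Finset.sum_congr rfl fun i _ => (Finset.sum_add_distrib).symm
      have h3 : ∀ i j : Fin K, (((c i : ℂ) * c j) • (Γ i * Γ j) + ((c j : ℂ) * c i) • (Γ j * Γ i))
          = if i = j then ((2 : ℂ) * (c i) ^ 2) • 1 else 0 := by
        intro i j
        by_cases hij : i = j
        · subst hij
          simp [hsq i, mul_comm]
          module
        · simp only [hij, if_false, mul_comm ((c j : ℂ)) ((c i : ℂ)), ← smul_add]
          rw [hanti i j hij, smul_zero]
      rw [two_smul, h2]
      simp only [h3]
      simp only [Finset.sum_ite_eq, Finset.sum_ite_eq', Finset.mem_univ, if_true]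
      rw [hs]
      push_cast
      rw [Finset.sum_smul, Finset.smul_sum]
      refine Finset.sum_congr rfl fun i _ => ?_
      module
    exact smul_right_injective _ (two_ne_zero) key
  set r : ℝ := Real.sqrt s with hr
  have hr2 : r ^ 2 = s := Real.sq_sqrt hs0
  have hrpos : 0 < r := Real.sqrt_pos.mpr hpos
  set M : Matrix (Fin d) (Fin d) ℂ := (r : ℂ) • 1 - G with hM
  have hMh : M.IsHermitian := by
    unfold Matrix.IsHermitian
    rw [hM, Matrix.conjTranspose_sub, Matrix.conjTranspose_smul, hGh.eq,
      Matrix.conjTranspose_one]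
    simp [Complex.conj_ofReal]
  have hMM : M * M = ((2 * r : ℝ) : ℂ) • M := by
    rw [hM]
    rw [sub_mul, mul_sub, mul_sub, hGG]
    have : ((r : ℂ)) ^ 2 = (s : ℂ) := by exact_mod_cast congrArg (fun x : ℝ => (x : ℂ)) hr2
    rw [Matrix.smul_mul, Matrix.mul_smul, Matrix.smul_mul, Matrix.mul_smul]
    simp only [Matrix.one_mul, Matrix.mul_one]
    rw [smul_sub]
    push_cast
    rw [← this]
    module
  have hMpsd : M.PosSemidef := by
    have h1 : (Mᴴ * M).PosSemidef := Matrix.posSemidef_conjTranspose_mul_self M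
    rw [hMh.eq, hMM] at h1
    have h2 : M = (((2 * r)⁻¹ : ℝ) : ℂ) • (((2 * r : ℝ) : ℂ) • M) := by
      rw [smul_smul, ← Complex.ofReal_mul, inv_mul_cancel₀ (by positivity), Complex.ofReal_one,
        one_smul]
    rw [h2]
    exact aux_psd_smul h1 (by positivity)
  have htrM : 0 ≤ ((ρ * M).trace) := aux_trace_mul_psd_nonneg hρ hMpsd
  have htrG : ((ρ * G).trace) = (s : ℂ) := by
    have hterm : ∀ j, (ρ * Γ j).trace = ((c j : ℝ) : ℂ) := by
      intro j
      have him : ((ρ * Γ j).trace).im = 0 := by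
        have h1 : star ((ρ * Γ j).trace) = (ρ * Γ j).trace := by
          rw [← Matrix.trace_conjTranspose, Matrix.conjTranspose_mul, hρ.1.eq, (hherm j).eq,
            Matrix.trace_mul_comm]
        have h2 := congrArg Complex.im h1
        simp [Complex.star_def] at h2
        linarith
      rw [Complex.ext_iff]
      constructor
      · simp [hc]
      · simp [him]
    rw [hG, Matrix.mul_sum, Matrix.trace_sum, hs]
    push_cast
    refine Finset.sum_congr rfl fun j _ => ?_
    rw [Matrix.mul_smul, Matrix.trace_smul, hterm j, smul_eq_mul]
    ring
  have hcalc : ((ρ * M).trace) = ((r - s : ℝ) : ℂ) := by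
    rw [hM, Matrix.mul_sub, Matrix.trace_sub, htrG, Matrix.mul_smul, Matrix.trace_smul,
      Matrix.mul_one, htr]
    push_cast [smul_eq_mul]
    ring
  rw [hcalc] at htrM
  rw [Complex.le_def] at htrM
  have hsr : s ≤ r := by
    have := htrM.1
    simp at this
    linarith
  nlinarith
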